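/- Let X and Y be nonempty compact Polish spaces, let π : X × Y → ℝ be continuous, let (Cₙ) be a decreasing sequence of closed subsets of Y, and let s ∈ X. Suppose that for every n there exists a Borel probability measure μₙ on Y with μₙ(Cₙ) = 1 such that s is a best response to μₙ. Then there exists a Borel probability measure μ on Y with μ(⋂ₙ Cₙ) = 1 such that s is a best response to μ. -/

import Mathlib

open MeasureTheory

open MeasureTheory Filter Topology BoundedContinuousFunction TopologicalSpace Set
open scoped ENNReal NNReal

open Finset in
lemma layer_sum {ε : ℝ} (hε : 0 < ε) : ∀ (m : ℕ) (a : ℝ), 0 ≤ a → a ≤ m * ε →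
    ε * ∑ i ∈ Finset.range m, min 1 (max 0 ((a - i * ε) / ε)) = a := by
  intro m
  induction m with
  | zero =>
    intro a h0 h1
    simp only [Nat.cast_zero, zero_mul] at h1
    simp [le_antisymm h1 h0]
  | succ m ih =>
    intro a h0 h1
    rcases le_or_gt a (m * ε) with hm | hm
    · have hmax : max 0 ((a - m * ε) / ε) = 0 :=
        max_eq_left (div_nonpos_of_nonpos_of_nonneg (by linarith) hε.le)
      rw [Finset.sum_range_succ, hmax]
      simp only [min_eq_right (zero_le_one' ℝ), add_zero]
      exact ih a h0 hm
    · have key : ∀ i ∈ Finset.range m, min 1 (max 0 ((a - i * ε) / ε)) = 1 := by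
        intro i hi
        rw [Finset.mem_range] at hi
        have hi' : (i : ℝ) + 1 ≤ m := by exact_mod_cast hi
        have hx : 1 ≤ (a - i * ε) / ε := by
          rw [le_div_iff₀ hε]
          nlinarith
        rw [max_eq_right (le_trans zero_le_one hx), min_eq_left hx]
      rw [Finset.sum_range_succ, Finset.sum_congr rfl key, Finset.sum_const, nsmul_eq_mul,
        mul_one, Finset.card_range]
      have h1' : a ≤ (m + 1 : ℝ) * ε := by push_cast at h1; linarith
      have h2 : max 0 ((a - m * ε) / ε) = (a - m * ε) / ε :=
        max_eq_right (div_nonneg (by linarith) hε.le)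
      have h3 : min 1 ((a - m * ε) / ε) = (a - m * ε) / ε :=
        min_eq_right ((div_le_one hε).mpr (by linarith))
      rw [h2, h3]
      field_simp
      ring

theorem exists_weak_ulim {Y : Type} [TopologicalSpace Y] [PolishSpace Y] [CompactSpace Y]
    [Nonempty Y] [MeasurableSpace Y] [BorelSpace Y] (μs : ℕ → ProbabilityMeasure Y) :
    ∃ μ : ProbabilityMeasure Y, ∀ f : Y →ᵇ ℝ,
      Filter.Tendsto (fun n => ∫ y, f y ∂(μs n : Measure Y))
        (Ultrafilter.of Filter.atTop : Ultrafilter ℕ)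
        (𝓝 (∫ y, f y ∂(μ : Measure Y))) := by
  classical
  set 𝒰 : Ultrafilter ℕ := Ultrafilter.of Filter.atTop with h𝒰
  -- existence of ultrafilter limits
  have hex : ∀ f : Y →ᵇ ℝ, ∃ c : ℝ,
      Tendsto (fun n => ∫ y, f y ∂(μs n : Measure Y)) 𝒰 (𝓝 c) := by
    intro f
    have hmem : (𝒰.map fun n => ∫ y, f y ∂(μs n : Measure Y) : Filter ℝ) ≤
        Filter.principal (Icc (-‖f‖) ‖f‖) := by
      rw [Filter.le_principal_iff, Ultrafilter.coe_map, Filter.mem_map]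
      refine Filter.univ_mem' fun n => ?_
      have hb := BoundedContinuousFunction.norm_integral_le_norm (μs n : Measure Y) f
      rw [Real.norm_eq_abs] at hb
      exact abs_le.mp hb
    obtain ⟨c, -, hc⟩ := (isCompact_Icc (a := -‖f‖) (b := ‖f‖)).ultrafilter_le_nhds
      (𝒰.map fun n => ∫ y, f y ∂(μs n : Measure Y)) hmem
    exact ⟨c, hc⟩
  choose L hL using hex
  -- basic properties of L
  have hint : ∀ (ν : ProbabilityMeasure Y) (f : Y →ᵇ ℝ), Integrable f (ν : Measure Y) :=
    fun ν f => f.integrable _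
  have hLmono : ∀ f g : Y →ᵇ ℝ, (∀ y, f y ≤ g y) → L f ≤ L g := fun f g hfg =>
    le_of_tendsto_of_tendsto' (hL f) (hL g) fun n =>
      integral_mono (hint _ f) (hint _ g) hfg
  have hLadd : ∀ f g : Y →ᵇ ℝ, L (f + g) = L f + L g := by
    intro f g
    refine tendsto_nhds_unique (hL (f + g)) (Tendsto.congr (fun n => ?_) ((hL f).add (hL g)))
    rw [← integral_add (hint _ f) (hint _ g)]
    simp
  have hLconst : ∀ c : ℝ, L (BoundedContinuousFunction.const Y c) = c := by
    intro c
    refine tendsto_nhds_unique (hL _) (Tendsto.congr (fun n => ?_) tendsto_const_nhds)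
    simp
  have hLnonneg : ∀ f : Y →ᵇ ℝ, (∀ y, 0 ≤ f y) → 0 ≤ L f := fun f hf =>
    ge_of_tendsto' (hL f) fun n => integral_nonneg hf
  have hLsmul : ∀ (c : ℝ) (f : Y →ᵇ ℝ), L (c • f) = c * L f := by
    intro c f
    refine tendsto_nhds_unique (hL _) (Tendsto.congr (fun n => ?_) ((hL f).const_mul c))
    rw [show (fun y => (c • f) y) = fun y => c • f y from rfl, integral_smul, smul_eq_mul]
  have hLzero : L 0 = 0 := by
    refine tendsto_nhds_unique (hL _) (Tendsto.congr (fun n => ?_) tendsto_const_nhds)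
    simp
  have hLsum : ∀ (m : ℕ) (g : ℕ → Y →ᵇ ℝ),
      L (∑ i ∈ Finset.range m, g i) = ∑ i ∈ Finset.range m, L (g i) := by
    intro m g
    induction m with
    | zero => simpa using hLzero
    | succ m ih => rw [Finset.sum_range_succ, Finset.sum_range_succ, hLadd, ih]
  have hc1 : ∀ y : Y, (BoundedContinuousFunction.const Y (1 : ℝ)) y = 1 := fun _ => rfl
  -- the content
  set lam : Compacts Y → ℝ := fun K =>
    sInf ((fun h => L h) '' {h : Y →ᵇ ℝ | (∀ y, 0 ≤ h y) ∧ ∀ y ∈ (K : Set Y), 1 ≤ h y})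
    with hlam
  have hne : ∀ K : Compacts Y,
      ((fun h => L h) '' {h : Y →ᵇ ℝ | (∀ y, 0 ≤ h y) ∧ ∀ y ∈ (K : Set Y), 1 ≤ h y}).Nonempty :=
    fun K => ⟨L (BoundedContinuousFunction.const Y 1),
      ⟨_, ⟨fun y => zero_le_one, fun y _ => le_refl 1⟩, rfl⟩⟩
  have hbdd : ∀ K : Compacts Y, BddBelow
      ((fun h => L h) '' {h : Y →ᵇ ℝ | (∀ y, 0 ≤ h y) ∧ ∀ y ∈ (K : Set Y), 1 ≤ h y}) := by
    rintro K
    refine ⟨0, ?_⟩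
    rintro r ⟨h, ⟨h0, -⟩, rfl⟩
    exact hLnonneg h h0
  have lam_nonneg : ∀ K, 0 ≤ lam K := by
    intro K
    exact le_csInf (hne K) (by rintro r ⟨h, ⟨h0, -⟩, rfl⟩; exact hLnonneg h h0)
  have lam_le : ∀ (K : Compacts Y) (h : Y →ᵇ ℝ), (∀ y, 0 ≤ h y) →
      (∀ y ∈ (K : Set Y), 1 ≤ h y) → lam K ≤ L h :=
    fun K h h0 h1 => csInf_le (hbdd K) ⟨h, ⟨h0, h1⟩, rfl⟩
  have le_lam : ∀ (K : Compacts Y) (g : Y →ᵇ ℝ), (∀ y, 0 ≤ g y) → (∀ y, g y ≤ 1) →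
      (∀ y, y ∉ (K : Set Y) → g y = 0) → L g ≤ lam K := by
    intro K g hg0 hg1 hgK
    refine le_csInf (hne K) ?_
    rintro r ⟨h, ⟨h0, h1⟩, rfl⟩
    refine hLmono _ _ fun y => ?_
    by_cases hy : y ∈ (K : Set Y)
    · exact le_trans (hg1 y) (h1 y hy)
    · rw [hgK y hy]; exact h0 y
  have lam_mono : ∀ K₁ K₂ : Compacts Y, (K₁ : Set Y) ⊆ K₂ → lam K₁ ≤ lam K₂ := by
    intro K₁ K₂ hK
    refine csInf_le_csInf (hbdd K₁) (hne K₂) ?_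
    rintro r ⟨h, ⟨h0, h1⟩, rfl⟩
    exact ⟨h, ⟨h0, fun y hy => h1 y (hK hy)⟩, rfl⟩
  have lam_sup_le : ∀ K₁ K₂ : Compacts Y, lam (K₁ ⊔ K₂) ≤ lam K₁ + lam K₂ := by
    intro K₁ K₂
    refine le_of_forall_pos_le_add ?_
    intro ε hε
    obtain ⟨r₁, ⟨h₁, ⟨h₁0, h₁1⟩, rfl⟩, hr₁⟩ := Real.lt_sInf_add_pos (hne K₁) (half_pos hε)
    obtain ⟨r₂, ⟨h₂, ⟨h₂0, h₂1⟩, rfl⟩, hr₂⟩ := Real.lt_sInf_add_pos (hne K₂) (half_pos hε)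
    have : lam (K₁ ⊔ K₂) ≤ L (h₁ + h₂) := by
      refine lam_le _ _ (fun y => add_nonneg (h₁0 y) (h₂0 y)) ?_
      intro y hy
      rcases hy with hy | hy
      · simpa using add_le_add (h₁1 y hy) (h₂0 y)
      · simpa [add_comm] using add_le_add (h₂1 y hy) (h₁0 y)
    rw [hLadd] at this
    calc lam (K₁ ⊔ K₂) ≤ L h₁ + L h₂ := this
      _ ≤ (lam K₁ + ε / 2) + (lam K₂ + ε / 2) := add_le_add hr₁.le hr₂.le
      _ = lam K₁ + lam K₂ + ε := by ring
  have lam_sup_disjoint : ∀ K₁ K₂ : Compacts Y, Disjoint (K₁ : Set Y) (K₂ : Set Y) →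
      lam (K₁ ⊔ K₂) = lam K₁ + lam K₂ := by
    intro K₁ K₂ hdisj
    refine le_antisymm (lam_sup_le K₁ K₂) ?_
    obtain ⟨g, hg1, hg2, hg01⟩ :=
      exists_continuous_zero_one_of_isClosed K₁.2.isClosed K₂.2.isClosed hdisj
    set u : Y →ᵇ ℝ := BoundedContinuousFunction.const Y 1 - mkOfCompact g with hu
    have hu_apply : ∀ y, u y = 1 - g y := fun y => rfl
    have hu0 : ∀ y, 0 ≤ u y := fun y => by
      have := (hg01 y).2; rw [hu_apply]; linarith
    have hu1 : ∀ y, u y ≤ 1 := fun y => by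
      have := (hg01 y).1; rw [hu_apply]; linarith
    have huK₁ : ∀ y ∈ (K₁ : Set Y), u y = 1 := fun y hy => by
      rw [hu_apply, hg1 hy]; simp
    have huK₂ : ∀ y ∈ (K₂ : Set Y), u y = 0 := fun y hy => by
      rw [hu_apply, hg2 hy]; simp
    refine le_csInf (hne _) ?_
    rintro r ⟨h, ⟨h0, h1⟩, rfl⟩
    have hsplit : h * u + h * (BoundedContinuousFunction.const Y 1 - u) = h := by
      ext y
      simp only [BoundedContinuousFunction.coe_add, BoundedContinuousFunction.coe_mul,
        BoundedContinuousFunction.coe_sub, BoundedContinuousFunction.coe_sub,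
        Pi.add_apply, Pi.mul_apply, Pi.sub_apply, Function.const_apply, hc1]
      ring
    have h₁le : lam K₁ ≤ L (h * u) := by
      refine lam_le _ _ (fun y => mul_nonneg (h0 y) (hu0 y)) ?_
      intro y hy
      have : h y * u y = h y := by rw [huK₁ y hy, mul_one]
      rw [BoundedContinuousFunction.coe_mul]
      simpa [this] using h1 y (Or.inl hy)
    have h₂le : lam K₂ ≤ L (h * (BoundedContinuousFunction.const Y 1 - u)) := by
      refine lam_le _ _ (fun y => mul_nonneg (h0 y) (by
        have := hu1 y
        simp only [BoundedContinuousFunction.coe_sub, Pi.sub_apply]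
        linarith [hc1 y])) ?_
      intro y hy
      have huy : u y = 0 := huK₂ y hy
      have h1y : 1 ≤ h y := h1 y (Or.inr hy)
      simp only [BoundedContinuousFunction.coe_mul, BoundedContinuousFunction.coe_sub,
        Pi.mul_apply, Pi.sub_apply, huy]
      rw [hc1 y]
      linarith
    calc lam K₁ + lam K₂ ≤ L (h * u) + L (h * (BoundedContinuousFunction.const Y 1 - u)) :=
          add_le_add h₁le h₂le
      _ = L h := by rw [← hLadd, hsplit]
  -- build the content
  set κ : Content Y :=
    { toFun := fun K => Real.toNNReal (lam K)
      mono' := fun K₁ K₂ hK => Real.toNNReal_mono (lam_mono K₁ K₂ hK)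
      sup_disjoint' := fun K₁ K₂ hdisj _ _ => by
        rw [lam_sup_disjoint K₁ K₂ hdisj, Real.toNNReal_add (lam_nonneg K₁) (lam_nonneg K₂)]
      sup_le' := fun K₁ K₂ => by
        rw [← Real.toNNReal_add (lam_nonneg K₁) (lam_nonneg K₂)]
        exact Real.toNNReal_mono (lam_sup_le K₁ K₂) } with hκ
  set μ : Measure Y := κ.measure with hμ
  have hopen : ∀ (U : Set Y) (hU : IsOpen U), μ U = κ.innerContent ⟨U, hU⟩ := by
    intro U hU
    rw [hμ, Content.measure_apply _ hU.measurableSet, κ.outerMeasure_of_isOpen U hU]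
  have hcoe : ∀ K : Compacts Y, (κ K : ℝ≥0∞) = ENNReal.ofReal (lam K) := by
    intro K
    simp [hκ, Content.mk_apply, ENNReal.ofReal]
  have hKU : ∀ (K : Compacts Y) (U : Set Y) (hU : IsOpen U), (K : Set Y) ⊆ U →
      ENNReal.ofReal (lam K) ≤ μ U := by
    intro K U hU hKU
    rw [hopen U hU, ← hcoe]
    exact κ.le_innerContent K ⟨U, hU⟩ hKU
  -- μ is a probability measure
  have hμuniv : μ univ = 1 := by
    rw [hopen univ isOpen_univ]
    refine le_antisymm ?_ ?_
    · refine iSup_le fun K => iSup_le fun _ => ?_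
      rw [hcoe]
      have : lam K ≤ 1 := by
        have := lam_le K (BoundedContinuousFunction.const Y 1)
          (fun y => zero_le_one) (fun y _ => le_refl 1)
        rwa [hLconst] at this
      calc ENNReal.ofReal (lam K) ≤ ENNReal.ofReal 1 := ENNReal.ofReal_le_ofReal this
        _ = 1 := ENNReal.ofReal_one
    · have h1 : (1 : ℝ≥0∞) ≤ (κ ⊤ : ℝ≥0∞) := by
        rw [hcoe]
        have : (1 : ℝ) ≤ lam ⊤ := by
          refine le_csInf (hne ⊤) ?_
          rintro r ⟨h, ⟨h0, h1⟩, rfl⟩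
          have : L (BoundedContinuousFunction.const Y 1) ≤ L h :=
            hLmono _ _ fun y => h1 y (by simp [Compacts.coe_top])
          rwa [hLconst] at this
        calc (1 : ℝ≥0∞) = ENNReal.ofReal 1 := ENNReal.ofReal_one.symm
          _ ≤ ENNReal.ofReal (lam ⊤) := ENNReal.ofReal_le_ofReal this
      refine le_trans h1 ?_
      exact le_iSup₂ (f := fun (K : Compacts Y) (_ : (K : Set Y) ⊆ (univ : Set Y)) =>
        (κ K : ℝ≥0∞)) ⊤ (subset_univ _)
  haveI hprob : IsProbabilityMeasure μ := ⟨hμuniv⟩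
  -- representation: L f = ∫ f dμ
  have main_nonneg : ∀ f : Y →ᵇ ℝ, (∀ y, 0 ≤ f y) → L f ≤ ∫ y, f y ∂μ := by
    intro f hf
    refine le_of_forall_pos_le_add ?_
    intro ε hε
    set δ : ℝ := ε / 2 with hδdef
    have hδ : 0 < δ := half_pos hε
    obtain ⟨k, hk⟩ : ∃ k : ℕ, max 2 ⌈‖f‖ / δ⌉₊ = k + 2 :=
      ⟨max 2 ⌈‖f‖ / δ⌉₊ - 2, by omega⟩
    set m : ℕ := k + 2 with hm
    have hm2 : ‖f‖ ≤ m * δ := by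
      have h1 : ‖f‖ / δ ≤ ⌈‖f‖ / δ⌉₊ := Nat.le_ceil _
      have h2 : (⌈‖f‖ / δ⌉₊ : ℝ) ≤ m := by
        rw [← hk]; exact_mod_cast Nat.cast_le.mpr (le_max_right _ _)
      have := le_trans h1 h2
      calc ‖f‖ = (‖f‖ / δ) * δ := by field_simp
        _ ≤ m * δ := mul_le_mul_of_nonneg_right this hδ.le
    -- the layer functions
    have hcont : ∀ i : ℕ, Continuous fun y => min 1 (max 0 ((f y - i * δ) / δ)) := by
      intro i
      exact (continuous_const.min ((continuous_const.max
        ((f.continuous.sub continuous_const).div_const δ))))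
    set g : ℕ → Y →ᵇ ℝ := fun i => mkOfCompact ⟨fun y => min 1 (max 0 ((f y - i * δ) / δ)),
      hcont i⟩ with hg
    have hg_apply : ∀ i y, g i y = min 1 (max 0 ((f y - i * δ) / δ)) := fun i y => rfl
    have hg0 : ∀ i y, 0 ≤ g i y := fun i y => by
      rw [hg_apply]; exact le_min zero_le_one (le_max_left _ _)
    have hg1 : ∀ i y, g i y ≤ 1 := fun i y => by rw [hg_apply]; exact min_le_left _ _
    have hfy : ∀ y, f y ≤ m * δ := fun y =>
      le_trans (le_trans (le_abs_self _) (f.norm_coe_le_norm y)) hm2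
    have hsum : ∀ y, f y = δ * ∑ i ∈ Finset.range m, g i y := by
      intro y
      rw [(layer_sum hδ m (f y) (hf y) (hfy y)).symm]
      exact congrArg (δ * ·) (Finset.sum_congr rfl fun i _ => (hg_apply i y).symm)
    have hfeq : f = δ • ∑ i ∈ Finset.range m, g i := by
      ext y
      rw [hsum y]
      simp
    -- per-layer bounds
    have hLg_le_one : ∀ i, L (g i) ≤ 1 := by
      intro i
      have := hLmono (g i) (BoundedContinuousFunction.const Y 1) (fun y => by
        simpa using hg1 i y)
      rwa [hLconst] at this
    have hbound : ∀ i : ℕ, L (g (i + 2)) ≤ ∫ y, g i y ∂μ := by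
      intro i
      set K : Compacts Y := ⟨{y | ((i : ℝ) + 2) * δ ≤ f y},
        (isClosed_le continuous_const f.continuous).isCompact⟩ with hK
      set U : Set Y := {y | ((i : ℝ) + 1) * δ < f y} with hU
      have hUopen : IsOpen U := isOpen_lt continuous_const f.continuous
      have step1 : L (g (i + 2)) ≤ lam K := by
        refine le_lam K _ (hg0 _) (hg1 _) ?_
        intro y hy
        simp only [hK, Compacts.coe_mk, mem_setOf_eq, not_le] at hy
        rw [hg_apply]
        push_cast
        have : (f y - ((i : ℝ) + 2) * δ) / δ ≤ 0 :=
          div_nonpos_of_nonpos_of_nonneg (by linarith) hδ.le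
        rw [max_eq_left this, min_eq_right zero_le_one]
      have step2 : lam K ≤ (μ U).toReal := by
        have hKsubU : (K : Set Y) ⊆ U := by
          intro y hy
          simp only [hK, Compacts.coe_mk, mem_setOf_eq] at hy
          simp only [hU, mem_setOf_eq]
          nlinarith
        have := hKU K U hUopen hKsubU
        have hne_top : μ U ≠ ⊤ := measure_ne_top μ U
        calc lam K = (ENNReal.ofReal (lam K)).toReal := by
              rw [ENNReal.toReal_ofReal (lam_nonneg K)]
          _ ≤ (μ U).toReal := ENNReal.toReal_mono hne_top this
      have step3 : (μ U).toReal ≤ ∫ y, g i y ∂μ := by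
        have hind : ∀ y, U.indicator (1 : Y → ℝ) y ≤ g i y := by
          intro y
          by_cases hy : y ∈ U
          · rw [Set.indicator_of_mem hy, Pi.one_apply]
            simp only [hU, mem_setOf_eq] at hy
            rw [hg_apply]
            have h1' : 1 ≤ (f y - i * δ) / δ := by
              rw [le_div_iff₀ hδ]; linarith
            rw [max_eq_right (le_trans zero_le_one h1'), min_eq_left h1']
          · rw [Set.indicator_of_notMem hy]
            exact hg0 i y
        calc (μ U).toReal = ∫ y, U.indicator (1 : Y → ℝ) y ∂μ := by
              rw [integral_indicator_one hUopen.measurableSet]; rfl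
          _ ≤ ∫ y, g i y ∂μ := integral_mono
              ((integrable_const (1 : ℝ)).indicator hUopen.measurableSet)
              ((g i).integrable μ) hind
      exact le_trans step1 (le_trans step2 step3)
    -- summing up
    have hLf : L f = δ * ∑ i ∈ Finset.range m, L (g i) := by
      rw [hfeq, hLsmul, hLsum]
    have hIf : ∫ y, f y ∂μ = δ * ∑ i ∈ Finset.range m, ∫ y, g i y ∂μ := by
      calc ∫ y, f y ∂μ = ∫ y, δ * ∑ i ∈ Finset.range m, g i y ∂μ := by
            refine integral_congr_ae (Filter.Eventually.of_forall fun y => ?_)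
            exact hsum y
        _ = δ * ∫ y, ∑ i ∈ Finset.range m, g i y ∂μ := by rw [integral_const_mul]
        _ = δ * ∑ i ∈ Finset.range m, ∫ y, g i y ∂μ := by
            rw [integral_finset_sum _ fun i _ => (g i).integrable μ]
    have hsum_le : ∑ i ∈ Finset.range m, L (g i) ≤
        2 + ∑ i ∈ Finset.range m, ∫ y, g i y ∂μ := by
      have e1 : ∑ i ∈ Finset.range m, L (g i)
          = (∑ i ∈ Finset.range k, L (g (i + 2))) + L (g 1) + L (g 0) := by
        rw [hm, Finset.sum_range_succ' (fun i => L (g i)) (k + 1),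
          Finset.sum_range_succ' (fun i => L (g (i + 1))) k]
      have e2 : (∑ i ∈ Finset.range k, L (g (i + 2))) ≤
          ∑ i ∈ Finset.range k, ∫ y, g i y ∂μ :=
        Finset.sum_le_sum fun i _ => hbound i
      have e3 : ∑ i ∈ Finset.range k, ∫ y, g i y ∂μ ≤
          ∑ i ∈ Finset.range m, ∫ y, g i y ∂μ := by
        refine Finset.sum_le_sum_of_subset_of_nonneg ?_ fun i _ _ => integral_nonneg (hg0 i)
        exact Finset.range_subset_range.mpr (by omega)
      have := hLg_le_one 0
      have := hLg_le_one 1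
      linarith
    calc L f = δ * ∑ i ∈ Finset.range m, L (g i) := hLf
      _ ≤ δ * (2 + ∑ i ∈ Finset.range m, ∫ y, g i y ∂μ) :=
          mul_le_mul_of_nonneg_left hsum_le hδ.le
      _ = (δ * ∑ i ∈ Finset.range m, ∫ y, g i y ∂μ) + 2 * δ := by ring
      _ = ∫ y, f y ∂μ + ε := by rw [← hIf, hδdef]; ring
  have main_le : ∀ f : Y →ᵇ ℝ, L f ≤ ∫ y, f y ∂μ := by
    intro f
    have hshift : ∀ y, 0 ≤ (f + BoundedContinuousFunction.const Y ‖f‖) y := by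
      intro y
      have hb : |f y| ≤ ‖f‖ := by rw [← Real.norm_eq_abs]; exact f.norm_coe_le_norm y
      have hcn : (BoundedContinuousFunction.const Y ‖f‖) y = ‖f‖ := rfl
      simp only [BoundedContinuousFunction.coe_add, Pi.add_apply]
      rw [hcn]
      linarith [(abs_le.mp hb).1]
    have := main_nonneg _ hshift
    rw [hLadd, hLconst] at this
    have hIconst : ∫ y, (f + BoundedContinuousFunction.const Y ‖f‖) y ∂μ
        = (∫ y, f y ∂μ) + ‖f‖ := by
      rw [show ⇑(f + BoundedContinuousFunction.const Y ‖f‖) = fun y => f y + ‖f‖ from rfl]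
      rw [integral_add (f.integrable μ) (integrable_const _)]
      simp
    rw [hIconst] at this
    linarith
  have hLneg : ∀ f : Y →ᵇ ℝ, L (-f) = -L f := by
    intro f
    refine tendsto_nhds_unique (hL (-f)) (Tendsto.congr (fun n => ?_) (hL f).neg)
    rw [← integral_neg]
    simp
  have main_eq : ∀ f : Y →ᵇ ℝ, L f = ∫ y, f y ∂μ := by
    intro f
    refine le_antisymm (main_le f) ?_
    have h1 := main_le (-f)
    rw [hLneg] at h1
    have h2 : ∫ y, (-f) y ∂μ = -∫ y, f y ∂μ := by
      rw [← integral_neg]; simp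
    rw [h2] at h1
    linarith
  refine ⟨⟨μ, hprob⟩, fun f => ?_⟩
  have : (∫ y, f y ∂μ) = L f := (main_eq f).symm
  exact this ▸ hL f


/-- Let `X`, `Y` be nonempty compact Polish spaces, `π : X × Y → ℝ`
continuous, `(Cₙ)` a decreasing sequence of closed subsets of `Y`, and `s ∈ X`.  If for every
`n` there is a Borel probability measure `μₙ` with `μₙ(Cₙ) = 1` to which `s` is a best
response, then there is a Borel probability measure `μ` with `μ(⋂ₙ Cₙ) = 1` to which `s` is a
best response. -/
theorem stmt_5
    {X Y : Type} [TopologicalSpace X] [PolishSpace X] [CompactSpace X] [Nonempty X]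
    [MeasurableSpace X] [BorelSpace X]
    [TopologicalSpace Y] [PolishSpace Y] [CompactSpace Y] [Nonempty Y]
    [MeasurableSpace Y] [BorelSpace Y]
    (π : X × Y → ℝ) (hπ : Continuous π)
    (C : ℕ → Set Y) (hclosed : ∀ n, IsClosed (C n)) (hdec : Antitone C) (s : X)
    (h : ∀ n : ℕ, ∃ μ : ProbabilityMeasure Y, (μ : Measure Y) (C n)ᶜ = 0 ∧
      ∀ t : X, ∫ y, π (s, y) ∂(μ : Measure Y) ≥ ∫ y, π (t, y) ∂(μ : Measure Y)) :
    ∃ μ : ProbabilityMeasure Y, (μ : Measure Y) (⋂ n, C n)ᶜ = 0 ∧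
      ∀ t : X, ∫ y, π (s, y) ∂(μ : Measure Y) ≥ ∫ y, π (t, y) ∂(μ : Measure Y) := by
  classical
  choose μs hnullC hbr using h
  obtain ⟨μ, hμ⟩ := exists_weak_ulim μs
  have hatTop : ((Ultrafilter.of Filter.atTop : Ultrafilter ℕ) : Filter ℕ) ≤ Filter.atTop :=
    Ultrafilter.of_le _
  refine ⟨μ, ?_, ?_⟩
  · -- the null condition
    have hCnull : ∀ n, (μ : Measure Y) (C n) = 1 := by
      intro n
      have hopen1 : ∀ U : Set Y, IsOpen U → C n ⊆ U → (μ : Measure Y) U = 1 := by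
        intro U hU hCU
        have hdisj : Disjoint Uᶜ (C n) :=
          Set.disjoint_left.mpr fun y hyU hyC => hyU (hCU hyC)
        obtain ⟨g, hg0, hg1, hg01⟩ :=
          exists_continuous_zero_one_of_isClosed hU.isClosed_compl (hclosed n) hdisj
        set gb : Y →ᵇ ℝ := BoundedContinuousFunction.mkOfCompact g with hgb
        have hgb_apply : ∀ y, gb y = g y := fun y => rfl
        have hev : ∀ᶠ k in ((Ultrafilter.of Filter.atTop : Ultrafilter ℕ) : Filter ℕ),
            (1 : ℝ) ≤ ∫ y, gb y ∂(μs k : Measure Y) := by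
          refine Filter.Eventually.filter_mono hatTop ?_
          refine Filter.eventually_atTop.mpr ⟨n, fun k hk => ?_⟩
          have hk1 : (μs k : Measure Y) (C n)ᶜ = 0 :=
            measure_mono_null (Set.compl_subset_compl.mpr (hdec hk)) (hnullC k)
          have hCk1 : (μs k : Measure Y) (C n) = 1 := by
            have h1 : (1 : ℝ≥0∞) ≤ (μs k : Measure Y) (C n) := by
              have hle := measure_union_le (μ := (μs k : Measure Y)) (C n) (C n)ᶜ
              rw [Set.union_compl_self, measure_univ, hk1, add_zero] at hle
              exact hle
            exact le_antisymm prob_le_one h1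
          have hind : ∀ y, (C n).indicator (1 : Y → ℝ) y ≤ gb y := by
            intro y
            by_cases hy : y ∈ C n
            · rw [Set.indicator_of_mem hy, Pi.one_apply, hgb_apply, hg1 hy, Pi.one_apply]
            · rw [Set.indicator_of_notMem hy]
              exact (hg01 y).1
          calc (1 : ℝ) = ((μs k : Measure Y) (C n)).toReal := by
                rw [hCk1, ENNReal.toReal_one]
            _ = ∫ y, (C n).indicator (1 : Y → ℝ) y ∂(μs k : Measure Y) :=
                (integral_indicator_one (hclosed n).measurableSet).symm
            _ ≤ ∫ y, gb y ∂(μs k : Measure Y) := integral_mono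
                ((integrable_const (1 : ℝ)).indicator (hclosed n).measurableSet)
                (gb.integrable _) hind
        have hlim : (1 : ℝ) ≤ ∫ y, gb y ∂(μ : Measure Y) := ge_of_tendsto (hμ gb) hev
        have hind2 : ∀ y, gb y ≤ U.indicator (1 : Y → ℝ) y := by
          intro y
          by_cases hy : y ∈ U
          · rw [Set.indicator_of_mem hy, Pi.one_apply, hgb_apply]
            exact (hg01 y).2
          · rw [Set.indicator_of_notMem hy, hgb_apply, hg0 hy, Pi.zero_apply]
        have h2 : ∫ y, gb y ∂(μ : Measure Y) ≤ ((μ : Measure Y) U).toReal := by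
          calc ∫ y, gb y ∂(μ : Measure Y)
              ≤ ∫ y, U.indicator (1 : Y → ℝ) y ∂(μ : Measure Y) := integral_mono
                (gb.integrable _) ((integrable_const (1 : ℝ)).indicator hU.measurableSet)
                hind2
            _ = ((μ : Measure Y) U).toReal := integral_indicator_one hU.measurableSet
        have h3 : (1 : ℝ≥0∞) ≤ (μ : Measure Y) U := by
          rw [← ENNReal.ofReal_one]
          calc ENNReal.ofReal 1 ≤ ENNReal.ofReal ((μ : Measure Y) U).toReal :=
              ENNReal.ofReal_le_ofReal (by linarith)
            _ = (μ : Measure Y) U := ENNReal.ofReal_toReal (measure_ne_top _ _)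
        exact le_antisymm prob_le_one h3
      have hreg := Set.measure_eq_iInf_isOpen (C n) (μ : Measure Y)
      rw [hreg]
      refine le_antisymm ?_ ?_
      · refine iInf_le_of_le Set.univ (iInf_le_of_le (Set.subset_univ _)
          (iInf_le_of_le isOpen_univ ?_))
        exact (hopen1 Set.univ isOpen_univ (Set.subset_univ _)).le
      · exact le_iInf fun U => le_iInf fun hCU => le_iInf fun hU => (hopen1 U hU hCU).ge
    have hnull' : ∀ n, (μ : Measure Y) (C n)ᶜ = 0 := by
      intro n
      rw [measure_compl (hclosed n).measurableSet (measure_ne_top _ _), hCnull n, measure_univ,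
        tsub_self]
    rw [Set.compl_iInter]
    exact measure_iUnion_null fun n => hnull' n
  · intro t
    have hcont : ∀ t : X, Continuous fun y => π (t, y) := fun t =>
      hπ.comp (Continuous.prodMk_right t)
    set F : X → Y →ᵇ ℝ := fun t =>
      BoundedContinuousFunction.mkOfCompact ⟨fun y => π (t, y), hcont t⟩ with hF
    have key : ∫ y, F t y ∂(μ : Measure Y) ≤ ∫ y, F s y ∂(μ : Measure Y) :=
      le_of_tendsto_of_tendsto' (hμ (F t)) (hμ (F s)) fun n => hbr n t
    exact key
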